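/- arXiv:2107.03355 — 4 statements merged into one kernel-verified Lean document; each statement's English description precedes it below -/
import Mathlib

section
/- Let G be a finitely generated group with word metric, let P and Q be subgroups of G, and let g ∈ G. Then P and gQg⁻¹ are commensurable subgroups (i.e., their intersection has finite index in both) if and only if the Hausdorff distance between the subsets P and gQ of G is finite. -/
open scoped Pointwise

variable {G : Type*} [Group G]

/-- Word distance between `g` and `h` with respect to a generating set `S` (values in `ℕ∞`). -/
noncomputable def wordDist (S : Set G) (g h : G) : ℕ∞ :=
  sInf {n : ℕ∞ | ∃ l : List G, (∀ x ∈ l, x ∈ S ∨ x⁻¹ ∈ S) ∧ l.prod = g⁻¹ * h ∧ (l.length : ℕ∞) = n}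

/-- Closed `r`-neighbourhood of a subset of `G` in the word metric. -/
def nbhd (S : Set G) (r : ℕ∞) (A : Set G) : Set G := {g | ∃ a ∈ A, wordDist S g a ≤ r}

/-- Hausdorff distance between subsets of `G` in the word metric. -/
noncomputable def hdist (S : Set G) (A B : Set G) : ℕ∞ :=
  sInf {r : ℕ∞ | A ⊆ nbhd S r B ∧ B ⊆ nbhd S r A}

/-- The conjugate subgroup `g P g⁻¹`. -/
def conjSub (g : G) (P : Subgroup G) : Subgroup G := ConjAct.toConjAct g • P

/-- The collection of all left cosets `gP`, `g ∈ G`, `P ∈ Ps`, as subsets of `G`. -/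
def cosetsOf (Ps : Set (Subgroup G)) : Set (Set G) :=
  {A | ∃ (g : G) (P : Subgroup G), P ∈ Ps ∧ A = g • (P : Set G)}

/-- A collection of subgroups is almost malnormal if any conjugate of a member meets any
member in a finite subgroup, except for the trivial configurations. -/
def AlmostMalnormal (Ps : Set (Subgroup G)) : Prop :=
  ∀ P ∈ Ps, ∀ P' ∈ Ps, ∀ g : G,
    ((conjSub g P ⊓ P' : Subgroup G) : Set G).Finite ∨ (P = P' ∧ g ∈ P)

/-- A collection of subgroups is reduced if commensurability of a member with a conjugate of a
member only happens trivially. -/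
def Reduced (Ps : Set (Subgroup G)) : Prop :=
  ∀ P ∈ Ps, ∀ Q ∈ Ps, ∀ g : G, Subgroup.Commensurable P (conjSub g Q) → P = Q ∧ g ∈ P


lemma wordDist_le_length (S : Set G) {x y : G} (l : List G)
    (h1 : ∀ z ∈ l, z ∈ S ∨ z⁻¹ ∈ S) (h2 : l.prod = x⁻¹ * y) :
    wordDist S x y ≤ l.length :=
  sInf_le ⟨l, h1, h2, rfl⟩

lemma wordDist_eq_one (S : Set G) (x y : G) : wordDist S x y = wordDist S 1 (x⁻¹ * y) := by
  simp [wordDist]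

lemma wordDist_ne_top (S : Set G) (hgen : Subgroup.closure S = ⊤) (x y : G) :
    wordDist S x y ≠ ⊤ := by
  have hx : x⁻¹ * y ∈ Submonoid.closure (S ∪ S⁻¹) := by
    rw [← Subgroup.closure_toSubmonoid, hgen]
    exact Subgroup.mem_top _
  obtain ⟨l, h1, h2⟩ := Submonoid.exists_list_of_mem_closure hx
  have hle := wordDist_le_length S (x := x) (y := y) l
    (fun z hz => (h1 z hz).imp id Set.mem_inv.mp) h2
  exact ne_top_of_le_ne_top (by simp) hle

lemma exists_list_of_wordDist_le (S : Set G) {x y : G} {r : ℕ∞} (hr : r ≠ ⊤)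
    (h : wordDist S x y ≤ r) :
    ∃ l : List G, (∀ z ∈ l, z ∈ S ∨ z⁻¹ ∈ S) ∧ l.prod = x⁻¹ * y ∧ (l.length : ℕ∞) ≤ r := by
  by_contra hc
  push_neg at hc
  have hge : r + 1 ≤ wordDist S x y := by
    refine le_sInf ?_
    rintro n ⟨l, h1, h2, rfl⟩
    exact (ENat.add_one_le_iff hr).mpr (lt_of_not_ge fun hle => (hc l h1 h2).not_ge hle)
  have := hge.trans h
  have : r < r := lt_of_lt_of_le ((ENat.add_one_le_iff hr).mp le_rfl) this
  exact absurd this (lt_irrefl r)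

lemma list_prod_mem_pow (A : Set G) : ∀ l : List G, (∀ x ∈ l, x ∈ A) → l.prod ∈ A ^ l.length := by
  intro l
  induction l with
  | nil => intro _; simp [Set.mem_one]
  | cons a l ih =>
    intro h
    rw [List.prod_cons, List.length_cons, pow_succ']
    exact Set.mul_mem_mul (h a (by simp)) (ih fun x hx => h x (by simp [hx]))

lemma ball_finite (S : Set G) (hS : S.Finite) {r : ℕ∞} (hr : r ≠ ⊤) :
    {z : G | wordDist S 1 z ≤ r}.Finite := by
  lift r to ℕ using hr with n
  set T : Set G := S ∪ S⁻¹ ∪ {1} with hT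
  have hTfin : T.Finite := (hS.union hS.inv).union (Set.finite_singleton 1)
  have hpow : ∀ m : ℕ, (T ^ m).Finite := by
    intro m
    induction m with
    | zero => simpa using Set.finite_one
    | succ k ih => rw [pow_succ]; exact ih.mul hTfin
  refine (hpow n).subset ?_
  intro z hz
  obtain ⟨l, h1, h2, h3⟩ := exists_list_of_wordDist_le S (by simp) hz
  have hlen : l.length ≤ n := by exact_mod_cast h3
  set l' : List G := l ++ List.replicate (n - l.length) 1 with hl'
  have hmem : ∀ x ∈ l', x ∈ T := by
    intro x hx
    rcases List.mem_append.mp hx with hx | hx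
    · rcases h1 x hx with h | h
      · exact Or.inl (Or.inl h)
      · exact Or.inl (Or.inr (Set.mem_inv.mpr h))
    · right; simpa using List.eq_of_mem_replicate hx
  have hprod : l'.prod = z := by
    simp [hl', List.prod_append, h2]
  have hlen' : l'.length = n := by
    simp [hl', Nat.add_sub_cancel' hlen]
  have := list_prod_mem_pow T l' hmem
  rwa [hlen', hprod] at this

lemma mem_conjSub {g x : G} {Q : Subgroup G} : x ∈ conjSub g Q ↔ g⁻¹ * x * g ∈ Q := by
  rw [conjSub, Subgroup.mem_pointwise_smul_iff_inv_smul_mem]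
  simp [ConjAct.smul_def, mul_assoc]

lemma index_ne_zero_of_f (K H : Subgroup G) {β : Type*} [Finite β] (f : K → β)
    (hf : ∀ k k' : K, f k = f k' → (k : G)⁻¹ * k' ∈ H) : (H.subgroupOf K).index ≠ 0 := by
  have : Finite (K ⧸ H.subgroupOf K) := by
    refine Finite.of_injective (fun c => f (Quotient.out c)) ?_
    intro c c' h
    have hm := hf _ _ h
    rw [← QuotientGroup.out_eq' c, ← QuotientGroup.out_eq' c']
    exact QuotientGroup.eq.mpr (Subgroup.mem_subgroupOf.mpr (by simpa using hm))
  exact Subgroup.index_ne_zero_of_finite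

/-- In a finitely generated group, `P` and `gQg⁻¹` are commensurable iff the
Hausdorff distance between `P` and the left coset `gQ` is finite. -/
theorem commensurable_iff_hdist_ne_top (S : Set G) (hS : S.Finite)
    (hgen : Subgroup.closure S = ⊤) (P Q : Subgroup G) (g : G) :
    Subgroup.Commensurable P (conjSub g Q) ↔ hdist S (P : Set G) (g • (Q : Set G)) ≠ ⊤ := by
  classical
  set K' := conjSub g Q with hK'def
  constructor
  · rintro ⟨h1, h2⟩
    have fQP : Finite (P ⧸ K'.subgroupOf P) := by
      rw [Subgroup.relIndex, Subgroup.index_eq_card] at h2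
      exact (Nat.card_ne_zero.mp h2).2
    have fQK : Finite (K' ⧸ P.subgroupOf K') := by
      rw [Subgroup.relIndex, Subgroup.index_eq_card] at h1
      exact (Nat.card_ne_zero.mp h1).2
    haveI := Fintype.ofFinite (P ⧸ K'.subgroupOf P)
    haveI := Fintype.ofFinite (K' ⧸ P.subgroupOf K')
    set r1 : ℕ∞ := Finset.univ.sup
      (fun c : P ⧸ K'.subgroupOf P => wordDist S 1 (((Quotient.out c : P) : G) * g)) with hr1def
    set r2 : ℕ∞ := Finset.univ.sup
      (fun c : K' ⧸ P.subgroupOf K' => wordDist S 1 (g⁻¹ * ((Quotient.out c : K') : G))) with hr2def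
    have hr1 : r1 < ⊤ := by
      refine (Finset.sup_lt_iff (by simp)).mpr ?_
      intro c _
      exact lt_top_iff_ne_top.mpr (wordDist_ne_top S hgen _ _)
    have hr2 : r2 < ⊤ := by
      refine (Finset.sup_lt_iff (by simp)).mpr ?_
      intro c _
      exact lt_top_iff_ne_top.mpr (wordDist_ne_top S hgen _ _)
    have hmem : ((P : Set G)) ⊆ nbhd S (r1 ⊔ r2) (g • (Q : Set G)) ∧
        (g • (Q : Set G)) ⊆ nbhd S (r1 ⊔ r2) (P : Set G) := by
      constructor
      · intro p hp
        set c : P ⧸ K'.subgroupOf P := QuotientGroup.mk (⟨p, hp⟩ : P)⁻¹ with hcdef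
        set d : P := Quotient.out c with hddef
        have hdc : QuotientGroup.mk d = c := QuotientGroup.out_eq' c
        have hm : ((d : G))⁻¹ * p⁻¹ ∈ K' := by
          have := QuotientGroup.eq.mp (hdc.trans hcdef)
          -- this : d⁻¹ * ⟨p,hp⟩⁻¹ ∈ K'.subgroupOf P
          have h' := Subgroup.mem_subgroupOf.mp this
          simpa using h'
        set m : G := ((d : G))⁻¹ * p⁻¹ with hmdef
        have hq2 : g⁻¹ * m * g ∈ Q := mem_conjSub.mp hm
        refine ⟨g * (g⁻¹ * m * g)⁻¹, ?_, ?_⟩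
        · have : (g⁻¹ * m * g)⁻¹ ∈ (Q : Set G) := Q.inv_mem hq2
          simpa [smul_eq_mul] using Set.smul_mem_smul_set (a := g) this
        · have e1 : p⁻¹ * (g * (g⁻¹ * m * g)⁻¹) = (d : G) * g := by
            have hp' : p⁻¹ = (d : G) * m := by rw [hmdef]; group
            rw [hp']; group
          rw [wordDist_eq_one, e1]
          refine le_trans ?_ le_sup_left
          rw [hr1def, hddef]
          exact Finset.le_sup (f := fun c : P ⧸ K'.subgroupOf P =>
            wordDist S 1 (((Quotient.out c : P) : G) * g)) (Finset.mem_univ c)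
      · intro x hx
        obtain ⟨q, hq, rfl⟩ := Set.mem_smul_set.mp hx
        have hy : g * q * g⁻¹ ∈ K' := by
          rw [hK'def, mem_conjSub]
          have : g⁻¹ * (g * q * g⁻¹) * g = q := by group
          rwa [this]
        set c : K' ⧸ P.subgroupOf K' := QuotientGroup.mk (⟨g * q * g⁻¹, hy⟩ : K')⁻¹ with hcdef
        set e : K' := Quotient.out c with hedef
        have hdc : QuotientGroup.mk e = c := QuotientGroup.out_eq' c
        have hm : ((e : G))⁻¹ * (g * q * g⁻¹)⁻¹ ∈ P := by
          have := QuotientGroup.eq.mp (hdc.trans hcdef)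
          have h' := Subgroup.mem_subgroupOf.mp this
          simpa using h'
        set m : G := ((e : G))⁻¹ * (g * q * g⁻¹)⁻¹ with hmdef
        refine ⟨m⁻¹, P.inv_mem hm, ?_⟩
        have e1 : (g • q)⁻¹ * m⁻¹ = g⁻¹ * (e : G) := by
          rw [hmdef, smul_eq_mul]; group
        rw [wordDist_eq_one, e1]
        refine le_trans ?_ le_sup_right
        rw [hr2def, hedef]
        exact Finset.le_sup (f := fun c : K' ⧸ P.subgroupOf K' =>
          wordDist S 1 (g⁻¹ * ((Quotient.out c : K') : G))) (Finset.mem_univ c)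
    have hle : hdist S (P : Set G) (g • (Q : Set G)) ≤ r1 ⊔ r2 := sInf_le hmem
    exact ne_top_of_le_ne_top (by simpa using (max_lt hr1 hr2).ne) hle
  · intro h
    have hlt : hdist S (P : Set G) (g • (Q : Set G)) < ⊤ := lt_top_iff_ne_top.mpr h
    obtain ⟨r, ⟨hPn, hQn⟩, hrt⟩ := sInf_lt_iff.mp hlt
    have hr : r ≠ ⊤ := hrt.ne
    set B : Set G := {z : G | wordDist S 1 z ≤ r} with hBdef
    have hB : B.Finite := ball_finite S hS hr
    haveI : Finite ↥B := hB.to_subtype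
    -- second component: K'.relindex P ≠ 0
    have key1 : ∀ p : P, ∃ b : ↥B, ∃ q ∈ Q, (b : G) = (p : G) * (g * q) := by
      intro p
      have hp : ((p : G))⁻¹ ∈ (P : Set G) := P.inv_mem p.2
      obtain ⟨a, ha, hd⟩ := hPn hp
      obtain ⟨q, hq, rfl⟩ := Set.mem_smul_set.mp ha
      refine ⟨⟨(p : G) * (g * q), ?_⟩, q, hq, rfl⟩
      rw [hBdef, Set.mem_setOf_eq]
      have e : wordDist S ((p : G))⁻¹ (g • q) = wordDist S 1 ((p : G) * (g * q)) := by
        rw [wordDist_eq_one S]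
        congr 1
        simp [smul_eq_mul]
      rw [← e]
      exact hd
    have h2 : (K'.subgroupOf P).index ≠ 0 := by
      refine index_ne_zero_of_f P K' (fun p => (key1 p).choose) ?_
      intro k k' hfe
      obtain ⟨q, hq, hb⟩ := (key1 k).choose_spec
      obtain ⟨q', hq', hb'⟩ := (key1 k').choose_spec
      have hfe' : ((key1 k).choose : ↥B) = (key1 k').choose := hfe
      rw [hfe'] at hb
      have heq : (k : G) * (g * q) = (k' : G) * (g * q') := hb.symm.trans hb'
      have e1 : ((k : G))⁻¹ * (k' : G) = g * (q * q'⁻¹) * g⁻¹ := by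
        have h3 : (k' : G) = (k : G) * (g * q) * (g * q')⁻¹ := by rw [heq]; group
        rw [h3]; group
      rw [hK'def, mem_conjSub, e1]
      have : g⁻¹ * (g * (q * q'⁻¹) * g⁻¹) * g = q * q'⁻¹ := by group
      rw [this]
      exact Q.mul_mem hq (Q.inv_mem hq')
    -- first component: P.relindex K' ≠ 0
    have key2 : ∀ k : K', ∃ b : ↥B, ∃ p ∈ P, (b : G) = g⁻¹ * (k : G) * p := by
      intro k
      have hki : ((k : G))⁻¹ ∈ K' := K'.inv_mem k.2
      have hq : g⁻¹ * ((k : G))⁻¹ * g ∈ Q := mem_conjSub.mp hki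
      have hmemQ : g * (g⁻¹ * ((k : G))⁻¹ * g) ∈ g • (Q : Set G) :=
        Set.smul_mem_smul_set hq
      obtain ⟨p, hp, hd⟩ := hQn (by simpa [smul_eq_mul] using hmemQ)
      refine ⟨⟨g⁻¹ * (k : G) * p, ?_⟩, p, hp, rfl⟩
      rw [hBdef, Set.mem_setOf_eq]
      have e : wordDist S (g * (g⁻¹ * ((k : G))⁻¹ * g)) p =
          wordDist S 1 (g⁻¹ * (k : G) * p) := by
        rw [wordDist_eq_one S]
        congr 1
        group
      rw [← e]
      exact hd
    have h1 : (P.subgroupOf K').index ≠ 0 := by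
      refine index_ne_zero_of_f K' P (fun k => (key2 k).choose) ?_
      intro k k' hfe
      obtain ⟨p, hp, hb⟩ := (key2 k).choose_spec
      obtain ⟨p', hp', hb'⟩ := (key2 k').choose_spec
      have hfe' : ((key2 k).choose : ↥B) = (key2 k').choose := hfe
      rw [hfe'] at hb
      have heq : g⁻¹ * (k : G) * p = g⁻¹ * (k' : G) * p' := hb.symm.trans hb'
      have e1 : ((k : G))⁻¹ * (k' : G) = p * p'⁻¹ := by
        have h3 : (k' : G) = g * (g⁻¹ * (k : G) * p * p'⁻¹) := by rw [heq]; group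
        rw [h3]; group
      rw [e1]
      exact P.mul_mem hp (P.inv_mem hp')
    exact ⟨h1, h2⟩
end

section
/- If P has finite index in its commensurator Comm_G(P), then the commensurator of Comm_G(P) equals Comm_G(P), i.e., Comm_G(Comm_G(P)) = Comm_G(P). -/
open scoped Pointwise

variable {G : Type*} [Group G]

private lemma le_comm_aux {G : Type*} [Group G] (P : Subgroup G) :
    P ≤ Subgroup.Commensurable.commensurator P := by
  intro g hg
  rw [Subgroup.Commensurable.commensurator_mem_iff]
  have : ConjAct.toConjAct g • P = P := by
    ext x
    simp only [Subgroup.mem_pointwise_smul_iff_inv_smul_mem, ConjAct.smul_def,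
      ConjAct.ofConjAct_inv, ConjAct.ofConjAct_toConjAct, inv_inv]
    constructor
    · intro h
      have := P.mul_mem (P.mul_mem hg h) (P.inv_mem hg)
      simpa [mul_assoc] using this
    · intro h
      exact P.mul_mem (P.mul_mem (P.inv_mem hg) h) hg
  rw [this]

/-- If `P` has finite index in its commensurator then the commensurator of the
commensurator of `P` equals the commensurator of `P`. -/
theorem commensurator_commensurator (P : Subgroup G)
    (hfi : P.relIndex (Subgroup.Commensurable.commensurator P) ≠ 0) :
    Subgroup.Commensurable.commensurator (Subgroup.Commensurable.commensurator P) =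
      Subgroup.Commensurable.commensurator P := by
  have hle := le_comm_aux P
  have hcomm : Subgroup.Commensurable P (Subgroup.Commensurable.commensurator P) :=
    ⟨hfi, by rw [Subgroup.relIndex_eq_one.mpr hle]; exact one_ne_zero⟩
  exact (Subgroup.Commensurable.eq hcomm.symm)
end

section
/- Let Γ be a simplicial graph. Γ is fine (for every edge e and every n, only finitely many circuits of length ≤ n contain e) if and only if for every vertex v, the space T_vΓ of neighbors of v equipped with the angle metric ∠_v is a locally finite metric space, where ∠_v(x,y) is the length of a shortest path from x to y in Γ ∖ {v} (∞ if none exists). -/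
open SimpleGraph

namespace FineAux

variable {V : Type*} {Γ : SimpleGraph V}

/-! ### Generic auxiliary lemmas about walks -/

/-- A walk in a simple graph is determined by its support. -/
lemma walk_eq_of_support_eq {u v : V} (p : Γ.Walk u v) :
    ∀ q : Γ.Walk u v, p.support = q.support → p = q := by
  induction p with
  | nil =>
    intro q hq
    cases q with
    | nil => rfl
    | cons h r =>
      simp only [Walk.support_nil, Walk.support_cons, List.cons.injEq, true_and] at hq
      exact absurd hq.symm r.support_ne_nil
  | cons h r ih =>
    intro q hq
    cases q with
    | nil =>
      simp only [Walk.support_nil, Walk.support_cons, List.cons.injEq, true_and] at hq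
      exact absurd hq r.support_ne_nil
    | cons h' r' =>
      simp only [Walk.support_cons, List.cons.injEq, true_and] at hq
      have hw : _root_.id (r.support.head r.support_ne_nil) = r'.support.head r'.support_ne_nil := by
        simp only [_root_.id]
        congr 1
      rw [Walk.head_support, Walk.head_support] at hw
      simp only [_root_.id] at hw
      subst hw
      cases ih r' hq
      rfl

lemma length_rotate [DecidableEq V] {u v : V} (c : Γ.Walk v v) (h : u ∈ c.support) :
    (c.rotate u h).length = c.length := by
  have h1 := congrArg Walk.length (c.take_spec h)
  simp only [Walk.length_append] at h1
  simp only [Walk.rotate, Walk.length_append]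
  omega

/-- Each consecutive pair of vertices along a walk is realized by a dart of the walk. -/
lemma exists_dart_getVert {u v : V} (p : Γ.Walk u v) :
    ∀ i, i < p.length → ∃ d ∈ p.darts, d.fst = p.getVert i ∧ d.snd = p.getVert (i + 1) := by
  induction p with
  | nil => intro i hi; simp at hi
  | @cons a b c h r ih =>
    intro i hi
    cases i with
    | zero =>
      refine ⟨⟨(a, b), h⟩, by simp [Walk.darts_cons], by simp, ?_⟩
      simp [Walk.getVert_cons_succ]
    | succ j =>
      obtain ⟨d, hd, h1, h2⟩ := ih j (by simpa [Walk.length_cons] using hi)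
      exact ⟨d, by simp [Walk.darts_cons, hd], by simp [Walk.getVert_cons_succ, h1],
        by simp [Walk.getVert_cons_succ, h2]⟩

lemma fst_darts_nodup {a : V} {p : Γ.Walk a a} (hp : p.IsCycle) :
    (p.darts.map (·.fst)).Nodup := by
  rw [Walk.map_fst_darts]
  have h3 := hp.three_le_length
  have hne : p.support.tail ≠ [] := by
    intro h
    have := congrArg List.length h
    simp only [List.length_tail, Walk.length_support, List.length_nil] at this
    omega
  have hgl : p.support.tail.getLast hne = a := by
    rw [List.getLast_tail, p.getLast_support]
  have htail : p.support.tail.dropLast ++ [a] = p.support.tail := by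
    conv_rhs => rw [← List.dropLast_append_getLast hne]
    rw [hgl]
  have hnd := hp.support_nodup
  rw [← htail, List.nodup_append] at hnd
  have hdl : p.support.dropLast = a :: p.support.tail.dropLast := by
    conv_lhs => rw [p.support_eq_cons, ← htail,
      show a :: (p.support.tail.dropLast ++ [a]) = (a :: p.support.tail.dropLast) ++ [a] by simp]
    rw [List.dropLast_concat]
  rw [hdl, List.nodup_cons]
  exact ⟨fun hmem => hnd.2.2 a hmem a (List.mem_singleton_self a) rfl, hnd.1⟩

lemma snd_darts_nodup {a : V} {p : Γ.Walk a a} (hp : p.IsCycle) :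
    (p.darts.map (·.snd)).Nodup := by
  rw [Walk.map_snd_darts]
  exact hp.support_nodup

lemma dart_eq_of_fst_eq {a : V} {p : Γ.Walk a a} (hp : p.IsCycle) {d₁ d₂ : Γ.Dart}
    (h₁ : d₁ ∈ p.darts) (h₂ : d₂ ∈ p.darts) (hf : d₁.fst = d₂.fst) : d₁ = d₂ :=
  List.inj_on_of_nodup_map (fst_darts_nodup hp) h₁ h₂ hf

lemma dart_eq_of_snd_eq {a : V} {p : Γ.Walk a a} (hp : p.IsCycle) {d₁ d₂ : Γ.Dart}
    (h₁ : d₁ ∈ p.darts) (h₂ : d₂ ∈ p.darts) (hf : d₁.snd = d₂.snd) : d₁ = d₂ :=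
  List.inj_on_of_nodup_map (snd_darts_nodup hp) h₁ h₂ hf

/-- A walk staying inside `s` bounds the extended distance inside the induced subgraph. -/
lemma edist_induce_le {s : Set V} :
    ∀ {x y : V} (p : Γ.Walk x y), (∀ z ∈ p.support, z ∈ s) → ∀ (hx : x ∈ s) (hy : y ∈ s),
      (Γ.induce s).edist ⟨x, hx⟩ ⟨y, hy⟩ ≤ (p.length : ℕ∞) := by
  intro x y p
  induction p with
  | nil =>
    intro _ hx hy
    simp [SimpleGraph.edist_self]
  | @cons u w v h r ih =>
    intro hsup hx hy
    have hw : w ∈ s := hsup w (by simp)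
    have hadj : (Γ.induce s).Adj ⟨u, hx⟩ ⟨w, hw⟩ := h
    have h1 : (Γ.induce s).edist ⟨u, hx⟩ ⟨w, hw⟩ ≤ (1 : ℕ∞) := by
      simpa using SimpleGraph.edist_le (Walk.cons hadj Walk.nil)
    have h2 := ih (fun z hz => hsup z (by simp [hz])) hw hy
    refine le_trans (SimpleGraph.edist_triangle (v := (⟨w, hw⟩ : {z // z ∈ s}))) ?_
    rw [Walk.length_cons, Nat.cast_add, Nat.cast_one]
    exact (add_le_add h1 h2).trans_eq (add_comm _ _)

/-- Membership in the support is preserved by rotation of closed walks. -/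
lemma mem_support_rotate [DecidableEq V] {u v : V} (c : Γ.Walk v v) (hnil : ¬c.Nil) (h : u ∈ c.support)
    {z : V} (hz : z ∈ c.support) : z ∈ (c.rotate u h).support := by
  have hne : c.support.tail ≠ [] := by
    intro hh
    have := congrArg List.length hh
    rw [Walk.not_nil_iff_lt_length] at hnil
    simp only [List.length_tail, Walk.length_support, List.length_nil] at this
    omega
  have htl : z ∈ c.support.tail := by
    rw [c.support_eq_cons] at hz
    rcases List.mem_cons.mp hz with rfl | hz'
    · have hgl : c.support.tail.getLast hne = z := by
        rw [List.getLast_tail, c.getLast_support]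
      have hmem := List.getLast_mem hne
      rwa [hgl] at hmem
    · exact hz'
  have hperm := (Walk.support_rotate c u h).perm
  have : z ∈ (c.rotate u h).support.tail := hperm.mem_iff.mpr htl
  rw [(c.rotate u h).support_eq_cons]
  exact List.mem_cons.mpr (Or.inr this)

/-! ### The sets used in the reverse direction -/

variable (Γ) in
/-- Neighbours `z` of `y` which are at angle (distance in `Γ` minus `y`) at most `n` from `x`. -/
def NSet (n : ℕ) (x y : V) : Set V :=
  {z | ∃ (hz : z ≠ y) (hx : x ≠ y), Γ.Adj y z ∧
    (Γ.induce {w : V | w ≠ y}).edist ⟨z, hz⟩ ⟨x, hx⟩ ≤ (n : ℕ∞)}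

variable (Γ) in
def stepSet (n : ℕ) (S : Set V) : Set V :=
  S ∪ ⋃ q ∈ {q : V × V | q.1 ∈ S ∧ q.2 ∈ S ∧ Γ.Adj q.2 q.1}, NSet Γ n q.1 q.2

variable (Γ) in
def VSet (n : ℕ) (a b : V) (k : ℕ) : Set V :=
  (stepSet Γ n)^[k] {a, b}

lemma VSet_zero (n : ℕ) (a b : V) : VSet Γ n a b 0 = {a, b} := rfl

lemma VSet_succ (n : ℕ) (a b : V) (k : ℕ) :
    VSet Γ n a b (k + 1) = stepSet Γ n (VSet Γ n a b k) := by
  rw [VSet, Function.iterate_succ_apply', VSet]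

lemma VSet_comm (n : ℕ) (a b : V) (k : ℕ) : VSet Γ n a b k = VSet Γ n b a k := by
  rw [VSet, VSet, Set.pair_comm]

lemma VSet_mono {n : ℕ} {a b : V} : ∀ {k m : ℕ}, k ≤ m → VSet Γ n a b k ⊆ VSet Γ n a b m := by
  intro k m hkm
  induction m, hkm using Nat.le_induction with
  | base => exact subset_rfl
  | succ m _ ih =>
    refine ih.trans ?_
    rw [VSet_succ]
    exact Set.subset_union_left

lemma NSet_subset_VSet {n : ℕ} {a b x y : V} {k : ℕ} (hx : x ∈ VSet Γ n a b k)
    (hy : y ∈ VSet Γ n a b k) (hadj : Γ.Adj y x) :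
    NSet Γ n x y ⊆ VSet Γ n a b (k + 1) := by
  rw [VSet_succ]
  intro z hz
  exact Or.inr (Set.mem_biUnion (show ((x, y) : V × V) ∈ _ from ⟨hx, hy, hadj⟩) hz)

/-- The key hypothesis: local finiteness of the angle metric. -/
def LocFin (Γ : SimpleGraph V) : Prop :=
  ∀ (v : V) (x : {w : V // w ≠ v}), Γ.Adj v x → ∀ r : ℕ,
    {y : {w : V // w ≠ v} | Γ.Adj v y ∧
      (Γ.induce {w : V | w ≠ v}).edist x y ≤ (r : ℕ∞)}.Finite

lemma NSet_finite (H : LocFin Γ) {n : ℕ} {x y : V} (hadj : Γ.Adj y x) :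
    (NSet Γ n x y).Finite := by
  have hfin := H y ⟨x, hadj.ne'⟩ hadj n
  refine (hfin.image Subtype.val).subset ?_
  rintro z ⟨hz, hx, hA, hd⟩
  refine ⟨⟨z, hz⟩, ⟨hA, ?_⟩, rfl⟩
  rw [SimpleGraph.edist_comm]
  exact hd

lemma VSet_finite (H : LocFin Γ) (n : ℕ) (a b : V) : ∀ k, (VSet Γ n a b k).Finite := by
  intro k
  induction k with
  | zero => rw [VSet_zero]; exact (Set.finite_singleton b).insert a
  | succ k ih =>
    rw [VSet_succ]
    refine ih.union ?_
    have hpairs : {q : V × V | q.1 ∈ VSet Γ n a b k ∧ q.2 ∈ VSet Γ n a b k ∧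
        Γ.Adj q.2 q.1}.Finite := by
      refine (ih.prod ih).subset ?_
      rintro ⟨q1, q2⟩ ⟨h1, h2, _⟩
      exact ⟨h1, h2⟩
    exact hpairs.biUnion fun q hq => NSet_finite H hq.2.2

/-! ### The key combinatorial lemmas -/

/-- For a cycle based at `y` of length at most `n`, the successor of `y` along the cycle lies
in the `NSet` determined by the predecessor of `y`. -/
lemma key_step {n : ℕ} {y : V} {p : Γ.Walk y y} (hp : p.IsCycle) (hlen : p.length ≤ n)
    {d : Γ.Dart} (hd : d ∈ p.darts) (hdf : d.fst = y) :
    ∃ x : V, (∃ d' ∈ p.darts, d'.fst = x ∧ d'.snd = y) ∧ d.snd ∈ NSet Γ n x y := by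
  have h3 := hp.three_le_length
  obtain ⟨z, h₂, s, rfl⟩ := Walk.not_nil_iff.mp hp.not_nil
  have hslen : 2 ≤ s.length := by
    rw [Walk.length_cons] at h3 hlen
    omega
  have hsrev : ¬s.reverse.Nil := by
    rw [Walk.not_nil_iff_lt_length, Walk.length_reverse]
    omega
  obtain ⟨x, h₃, t, ht⟩ := Walk.not_nil_iff.mp hsrev
  have hs2 : s = t.reverse.concat h₃.symm := by
    rw [← Walk.reverse_reverse s, ht, Walk.reverse_cons, Walk.concat_eq_append]
  set u := t.reverse with hu
  have hsupp : (Walk.cons h₂ s).support.tail = u.support ++ [y] := by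
    rw [Walk.support_cons, hs2, Walk.support_concat]
    simp
  have hnodup : (u.support ++ [y]).Nodup := by
    rw [← hsupp]; exact hp.support_nodup
  rw [List.nodup_append] at hnodup
  have hy_not : y ∉ u.support := fun hmem => hnodup.2.2 y hmem y (List.mem_singleton_self y) rfl
  have hlen_u : s.length = u.length + 1 := by
    rw [hs2, Walk.length_concat]
  have hd1 : (⟨(y, z), h₂⟩ : Γ.Dart) ∈ (Walk.cons h₂ s).darts := by
    simp [Walk.darts_cons]
  have hdd : d = ⟨(y, z), h₂⟩ := dart_eq_of_fst_eq hp hd hd1 hdf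
  have hzy : z ≠ y := fun h => hy_not (h ▸ u.start_mem_support)
  have hxy : x ≠ y := fun h => hy_not (h ▸ u.end_mem_support)
  refine ⟨x, ⟨⟨(x, y), h₃.symm⟩, ?_, rfl, rfl⟩, ?_⟩
  · rw [hs2]
    simp [Walk.darts_cons, Walk.darts_concat]
  · rw [hdd]
    refine ⟨hzy, hxy, h₂, ?_⟩
    have hbound := edist_induce_le (s := {w : V | w ≠ y}) u
      (fun w hw => fun hwy => hy_not (hwy ▸ hw)) hzy hxy
    refine hbound.trans ?_
    have hun : u.length ≤ n := by
      rw [Walk.length_cons] at hlen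
      omega
    exact_mod_cast hun

/-- Rotated version of `key_step`: for any dart `(y, z)` of a cycle of length at most `n`,
there is a dart `(x, y)` of the cycle with `z ∈ NSet x y`. -/
lemma key_rot [DecidableEq V] {n : ℕ} {v : V} {w : Γ.Walk v v} (hw : w.IsCycle) (hlen : w.length ≤ n)
    {d : Γ.Dart} (hd : d ∈ w.darts) :
    ∃ x : V, (∃ d' ∈ w.darts, d'.fst = x ∧ d'.snd = d.fst) ∧ d.snd ∈ NSet Γ n x d.fst := by
  have hy : d.fst ∈ w.support := Walk.dart_fst_mem_support_of_mem_darts _ hd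
  have hperm := (Walk.rotate_darts w _ hy).perm
  obtain ⟨x, ⟨d', hd', h1, h2⟩, hN⟩ := key_step (n := n) (hw.rotate hy)
    (by rw [length_rotate]; exact hlen) (hperm.mem_iff.mpr hd) rfl
  exact ⟨x, ⟨d', hperm.mem_iff.mp hd', h1, h2⟩, hN⟩

/-- Marching along a cycle: all the vertices stay in the sets `VSet`. -/
lemma march [DecidableEq V] {n : ℕ} {a b c₀ : V} (p : Γ.Walk c₀ c₀) (hp : p.IsCycle) (hlen : p.length ≤ n)
    (h0 : c₀ ∈ VSet Γ n a b 0) (h1 : p.getVert 1 ∈ VSet Γ n a b 0) :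
    ∀ i, i ≤ p.length → p.getVert i ∈ VSet Γ n a b i := by
  intro i
  induction i using Nat.strong_induction_on with
  | _ i ih =>
    match i with
    | 0 => intro _; simpa [Walk.getVert_zero] using h0
    | 1 => intro _; exact VSet_mono (Nat.zero_le 1) h1
    | (k + 2) =>
      intro hi
      have hk1 : k + 1 < p.length := by omega
      have hk : k < p.length := by omega
      obtain ⟨d, hd, hdf, hds⟩ := exists_dart_getVert p (k + 1) hk1
      obtain ⟨x, ⟨d', hd', h1f, h1s⟩, hN⟩ := key_rot hp hlen hd
      obtain ⟨d₀, hd₀, h0f, h0s⟩ := exists_dart_getVert p k hk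
      have hdd : d' = d₀ := dart_eq_of_snd_eq hp hd' hd₀ (by rw [h1s, hdf, h0s])
      have hx0 : x = p.getVert k := by rw [← h1f, hdd, h0f]
      have hadj' : Γ.Adj d.fst x := by
        have h := d₀.adj
        rw [show d₀.toProd.1 = d₀.fst from rfl, show d₀.toProd.2 = d₀.snd from rfl,
          h0f, h0s] at h
        rw [hdf, hx0]
        exact h.symm
      have hxk : x ∈ VSet Γ n a b (k + 1) :=
        VSet_mono (Nat.le_succ k) (hx0 ▸ ih k (by omega) (by omega))
      have hyk : d.fst ∈ VSet Γ n a b (k + 1) := hdf ▸ ih (k + 1) (by omega) (by omega)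
      rw [← hds]
      exact NSet_subset_VSet hxk hyk hadj' hN

/-- Every vertex on a cycle of length at most `n` through the edge `s(a, b)` lies in
`VSet Γ n a b n`, provided a dart `(a, b)` occurs in the cycle. -/
lemma crux [DecidableEq V] {n : ℕ} {a b : V} {v : V} (w : Γ.Walk v v) (hw : w.IsCycle)
    (hlen : w.length ≤ n) (hd : ∃ d ∈ w.darts, d.fst = a ∧ d.snd = b) :
    ∀ z ∈ w.support, z ∈ VSet Γ n a b n := by
  obtain ⟨d, hd, hda, hdb⟩ := hd
  have ha : a ∈ w.support := hda ▸ Walk.dart_fst_mem_support_of_mem_darts _ hd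
  set p := w.rotate a ha with hpdef
  have hp : p.IsCycle := hw.rotate ha
  have hplen : p.length ≤ n := by rw [hpdef, length_rotate]; exact hlen
  have hperm := (Walk.rotate_darts w a ha).perm
  have hdp : d ∈ p.darts := hperm.mem_iff.mpr hd
  have hlen0 : 0 < p.length := by
    have := hp.three_le_length; omega
  obtain ⟨d₁, hd₁, hf₁, hs₁⟩ := exists_dart_getVert p 0 hlen0
  have hfa : d₁.fst = a := by rw [hf₁, Walk.getVert_zero]
  have hd1d : d₁ = d := dart_eq_of_fst_eq hp hd₁ hdp (by rw [hfa, hda])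
  have hb1 : p.getVert 1 = b := by rw [← hs₁, hd1d, hdb]
  have hmarch := march (a := a) (b := b) p hp hplen (by rw [VSet_zero]; exact Set.mem_insert _ _)
    (by rw [hb1, VSet_zero]; exact Set.mem_insert_iff.mpr (Or.inr rfl))
  intro z hz
  have hznil : ¬w.Nil := hw.not_nil
  have hzp : z ∈ p.support := mem_support_rotate w hznil ha hz
  obtain ⟨i, hgv, hile⟩ := Walk.mem_support_iff_exists_getVert.mp hzp
  rw [← hgv]
  exact VSet_mono (hile.trans hplen) (hmarch i hile)

/-- Finiteness of lists with bounded length and entries in a finite set. -/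
lemma finite_lists {S : Set V} (hS : S.Finite) (m : ℕ) :
    {l : List V | l.length ≤ m ∧ ∀ x ∈ l, x ∈ S}.Finite := by
  have : Finite S := hS
  have h : {l : List S | l.length ≤ m}.Finite := List.finite_length_le _ _
  refine (h.image (List.map Subtype.val)).subset ?_
  rintro l ⟨hl, hmem⟩
  refine ⟨l.attach.map fun x => (⟨x.1, hmem x.1 x.2⟩ : S), ?_, ?_⟩
  · simpa using hl
  · simp [List.map_map, Function.comp_def]

end FineAux

open FineAux

/-- A simplicial graph is fine if every edge is contained in only finitely many circuits
(embedded cycles) of each bounded length. -/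
def SimpleGraph.Fine {V : Type*} (Γ : SimpleGraph V) : Prop :=
  ∀ e ∈ Γ.edgeSet, ∀ n : ℕ,
    {c : (v : V) × Γ.Walk v v | c.2.IsCycle ∧ e ∈ c.2.edges ∧ c.2.length ≤ n}.Finite

/-- A graph is fine iff at every vertex `v` the set of neighbours of `v`,
with the angle metric (distance measured in the graph with `v` deleted), is locally finite. -/
theorem fine_iff_angle_metric_locallyFinite {V : Type*} (Γ : SimpleGraph V) :
    Γ.Fine ↔
      ∀ (v : V) (x : {w : V // w ≠ v}), Γ.Adj v x → ∀ r : ℕ,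
        {y : {w : V // w ≠ v} | Γ.Adj v y ∧
          (Γ.induce {w : V | w ≠ v}).edist x y ≤ (r : ℕ∞)}.Finite := by
  constructor
  · -- Forward direction
    intro hfine v x hx r
    classical
    -- cycles through s(v, x) of length ≤ r + 2
    have hcyc := hfine s(v, (x : V)) (by simpa using hx) (r + 2)
    -- extraction map: second-to-last vertex of the cycle walk
    set g : ((v' : V) × Γ.Walk v' v') → V := fun c => c.2.support.dropLast.getLastD v with hg
    have hsub : {y : {w : V // w ≠ v} | Γ.Adj v y ∧
        (Γ.induce {w : V | w ≠ v}).edist x y ≤ (r : ℕ∞)} ⊆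
        insert x {y : {w : V // w ≠ v} | (Γ.Adj v y ∧
          (Γ.induce {w : V | w ≠ v}).edist x y ≤ (r : ℕ∞)) ∧ y ≠ x} := by
      intro y hy
      by_cases hxy : y = x
      · exact Set.mem_insert_iff.mpr (Or.inl hxy)
      · exact Set.mem_insert_iff.mpr (Or.inr ⟨hy, hxy⟩)
    refine Set.Finite.subset (Set.Finite.insert x ?_) hsub
    set S' := {y : {w : V // w ≠ v} | (Γ.Adj v y ∧
      (Γ.induce {w : V | w ≠ v}).edist x y ≤ (r : ℕ∞)) ∧ y ≠ x} with hS'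
    -- S'.image val ⊆ g '' (cycle set)
    have himg : Subtype.val '' S' ⊆ g ''
        {c : (v' : V) × Γ.Walk v' v' | c.2.IsCycle ∧ s(v, (x : V)) ∈ c.2.edges ∧
          c.2.length ≤ r + 2} := by
      rintro _ ⟨y, ⟨⟨hyadj, hyd⟩, hyne⟩, rfl⟩
      -- construct the cycle
      have hreach : (Γ.induce {w : V | w ≠ v}).Reachable x y := by
        rw [← SimpleGraph.edist_ne_top_iff_reachable]
        intro htop
        rw [htop] at hyd
        exact absurd (top_le_iff.mp hyd) (by simp)
      obtain ⟨q₀, hq₀⟩ := hreach.exists_walk_length_eq_edist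
      have hq₀len : (q₀.length : ℕ∞) ≤ (r : ℕ∞) := by rw [hq₀]; exact hyd
      have hq₀len' : q₀.length ≤ r := by exact_mod_cast hq₀len
      set π := q₀.bypass with hπdef
      have hπ : π.IsPath := q₀.bypass_isPath
      have hπlen : π.length ≤ r := (q₀.length_bypass_le).trans hq₀len'
      set emb := (SimpleGraph.Embedding.induce (G := Γ) {w : V | w ≠ v}) with hemb
      have hinj : Function.Injective (⇑emb.toHom) := emb.injective
      set P : Γ.Walk (x : V) (y : V) := π.map emb.toHom with hP
      have hPpath : P.IsPath := Walk.map_isPath_of_injective hinj hπ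
      have hPlen : P.length ≤ r := by
        exact (Walk.length_map (f := emb.toHom) (p := π)).trans_le hπlen
      have hPv : v ∉ P.support := by
        have hs : P.support = π.support.map emb.toHom := Walk.support_map (f := emb.toHom) (p := π)
        rw [hs]
        rintro hmem
        obtain ⟨z, _, hz⟩ := List.mem_map.mp hmem
        exact z.2 hz
      have hyv : Γ.Adj (y : V) v := hyadj.symm
      set C : Γ.Walk v v := Walk.cons hx (P.concat hyv) with hC
      have hCsupp' : C.support = v :: (P.support ++ [v]) := by
        rw [hC, Walk.support_cons, Walk.support_concat]
      have hxy' : (x : V) ≠ (y : V) := fun h => hyne (Subtype.ext h.symm)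
      have hCcycle : C.IsCycle := by
        rw [Walk.isCycle_def]
        refine ⟨?_, by simp [hC], ?_⟩
        · -- trail
          rw [Walk.isTrail_def, hC, Walk.edges_cons, Walk.edges_concat, List.nodup_cons]
          constructor
          · intro hmem
            rw [List.concat_eq_append, List.mem_append] at hmem
            rcases hmem with hmem | hmem
            · exact hPv (P.fst_mem_support_of_mem_edges hmem)
            · rw [List.mem_singleton] at hmem
              rw [Sym2.eq_iff] at hmem
              rcases hmem with ⟨h1, h2⟩ | ⟨h1, h2⟩
              · exact y.2 h1.symm
              · exact hxy' h2
          · rw [List.concat_eq_append, List.nodup_append]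
            refine ⟨hPpath.isTrail.edges_nodup, List.nodup_singleton _, ?_⟩
            intro e heP e' heY heq
            rw [List.mem_singleton] at heY
            subst heY heq
            exact hPv (P.snd_mem_support_of_mem_edges heP)
        · -- support tail nodup
          rw [hCsupp']
          simp only [List.tail_cons, List.nodup_append, List.nodup_singleton]
          exact ⟨hPpath.support_nodup, trivial, fun z hz w hw hzw => by
            rw [List.mem_singleton] at hw; subst hw; subst hzw; exact hPv hz⟩
      have hCe : s(v, (x : V)) ∈ C.edges := by
        rw [hC, Walk.edges_cons]; exact List.mem_cons_self
      have hClen : C.length ≤ r + 2 := by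
        rw [hC, Walk.length_cons, Walk.length_concat]
        omega
      refine ⟨⟨v, C⟩, ⟨hCcycle, hCe, hClen⟩, ?_⟩
      -- g value
      show C.support.dropLast.getLastD v = (y : V)
      rw [hCsupp', show v :: (P.support ++ [v]) = (v :: P.support) ++ [v] by simp,
        List.dropLast_concat, List.getLastD_cons]
      rw [List.getLastD_eq_getLast? , List.getLast?_eq_getLast_of_ne_nil P.support_ne_nil]
      simp [P.getLast_support]
    have hfin : (Subtype.val '' S').Finite := (hcyc.image g).subset himg
    exact hfin.of_finite_image (Subtype.val_injective.injOn)
  · -- Reverse direction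
    intro H e he n
    classical
    induction e using Sym2.ind with
    | _ a b =>
      rw [SimpleGraph.mem_edgeSet] at he
      have hVfin : (VSet Γ n a b n).Finite := VSet_finite H n a b n
      have hlists := finite_lists hVfin (n + 1)
      refine Set.Finite.of_finite_image (f := fun c => c.2.support) (hlists.subset ?_) ?_
      · -- image of supports is contained in bounded lists over VSet
        rintro _ ⟨c, ⟨hc, hce, hcl⟩, rfl⟩
        refine ⟨by rw [Walk.length_support]; omega, ?_⟩
        intro z hz
        -- find the dart realizing the edge
        have hedges : c.2.edges = c.2.darts.map SimpleGraph.Dart.edge := rfl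
        rw [hedges] at hce
        obtain ⟨d, hd, hde⟩ := List.mem_map.mp hce
        have hde' : s(d.fst, d.snd) = s(a, b) := hde
        rw [Sym2.eq_iff] at hde'
        rcases hde' with ⟨h1, h2⟩ | ⟨h1, h2⟩
        · exact crux c.2 hc hcl ⟨d, hd, h1, h2⟩ z hz
        · rw [VSet_comm]
          exact crux c.2 hc hcl ⟨d, hd, h1, h2⟩ z hz
      · -- injectivity on the set
        rintro ⟨v, w⟩ hvw ⟨v', w'⟩ hvw' hsupp
        simp only at hsupp
        have h1 : v = v' := by
          have hh := congrArg (fun l => l.head?) hsupp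
          rw [w.support_eq_cons, w'.support_eq_cons] at hh
          simp only [List.head?_cons, Option.some.injEq] at hh
          exact hh
        subst h1
        have h2 : w = w' := walk_eq_of_support_eq w w' hsupp
        subst h2
        rfl
end

section
/- Let q : (G,P) → (H,Q) be a quasi-isometry of pairs where P and Q are finite collections, Q is reduced, and every Q ∈ Q has finite index in its commensurator Comm_H(Q). Then every P ∈ P has finite index in its commensurator Comm_G(P). -/
open scoped Pointwise

variable {G : Type*} [Group G]

/-- `q` is an `(L, C, M)`-quasi-isometry of pairs `(G, Ps) → (H, Qs)`: an `(L, C)`-quasi-isometry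
of the groups (with respect to the word metrics of `S` and `T`) such that the relation
`{(A, B) : Hdist(q(A), B) < M}` on left cosets projects surjectively to both factors. -/
def IsQIPair {H : Type*} [Group H] (S : Set G) (T : Set H) (q : G → H)
    (Ps : Set (Subgroup G)) (Qs : Set (Subgroup H)) (L C M : ℕ) : Prop :=
  (∀ a b : G, wordDist T (q a) (q b) ≤ (L : ℕ∞) * wordDist S a b + (C : ℕ∞) ∧
      wordDist S a b ≤ (L : ℕ∞) * wordDist T (q a) (q b) + (C : ℕ∞)) ∧
  (∀ h : H, ∃ g : G, wordDist T (q g) h ≤ (C : ℕ∞)) ∧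
  (∀ A ∈ cosetsOf Ps, ∃ B ∈ cosetsOf Qs, hdist T (q '' A) B < (M : ℕ∞)) ∧
  (∀ B ∈ cosetsOf Qs, ∃ A ∈ cosetsOf Ps, hdist T (q '' A) B < (M : ℕ∞))

namespace QIPairAux

/-! ### Basic word-distance lemmas -/

lemma wordDist_le_of_list {S : Set G} {g h : G} {l : List G}
    (h1 : ∀ x ∈ l, x ∈ S ∨ x⁻¹ ∈ S) (h2 : l.prod = g⁻¹ * h) :
    wordDist S g h ≤ (l.length : ℕ∞) :=
  sInf_le ⟨l, h1, h2, rfl⟩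

lemma exists_list_of_wordDist_le {S : Set G} {g h : G} {n : ℕ}
    (hle : wordDist S g h ≤ (n : ℕ∞)) :
    ∃ l : List G, (∀ x ∈ l, x ∈ S ∨ x⁻¹ ∈ S) ∧ l.prod = g⁻¹ * h ∧ l.length ≤ n := by
  have hlt : wordDist S g h < ((n + 1 : ℕ) : ℕ∞) := by
    refine lt_of_le_of_lt hle ?_
    exact_mod_cast Nat.lt_succ_self n
  obtain ⟨a, ⟨l, hl1, hl2, hl3⟩, ha⟩ := sInf_lt_iff.mp hlt
  refine ⟨l, hl1, hl2, ?_⟩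
  rw [← hl3] at ha
  exact_mod_cast Nat.lt_succ_iff.mp (by exact_mod_cast ha)

lemma wordDist_lt_top {S : Set G} (hgen : Subgroup.closure S = ⊤) (g h : G) :
    wordDist S g h < ⊤ := by
  have hx : g⁻¹ * h ∈ Subgroup.closure S := by rw [hgen]; trivial
  have hx' : g⁻¹ * h ∈ Submonoid.closure (S ∪ S⁻¹) := by
    rw [← Subgroup.closure_toSubmonoid]; exact hx
  obtain ⟨l, hl1, hl2⟩ := Submonoid.exists_list_of_mem_closure hx'
  have : wordDist S g h ≤ (l.length : ℕ∞) := by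
    refine wordDist_le_of_list (fun x hx => ?_) hl2
    rcases hl1 x hx with h | h
    · exact Or.inl h
    · exact Or.inr (Set.mem_inv.mp h)
  exact lt_of_le_of_lt this (WithTop.coe_lt_top _)

lemma wordDist_mul_left (S : Set G) (a g h : G) :
    wordDist S (a * g) (a * h) = wordDist S g h := by
  unfold wordDist
  congr 1
  ext n
  constructor <;> (rintro ⟨l, h1, h2, h3⟩; exact ⟨l, h1, by rw [h2]; group, h3⟩)

lemma wordDist_triangle (S : Set G) (g h k : G) :
    wordDist S g k ≤ wordDist S g h + wordDist S h k := by
  rcases eq_top_or_lt_top (wordDist S g h) with h1 | h1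
  · rw [h1, top_add]; exact le_top
  rcases eq_top_or_lt_top (wordDist S h k) with h2 | h2
  · rw [h2, add_top]; exact le_top
  set d1 := wordDist S g h with hd1
  set d2 := wordDist S h k with hd2
  have hn1 : d1 = ((d1.toNat : ℕ) : ℕ∞) := (ENat.coe_toNat h1.ne).symm
  have hn2 : d2 = ((d2.toNat : ℕ) : ℕ∞) := (ENat.coe_toNat h2.ne).symm
  obtain ⟨l1, hl11, hl12, hl13⟩ := exists_list_of_wordDist_le (le_of_eq hn1)
  obtain ⟨l2, hl21, hl22, hl23⟩ := exists_list_of_wordDist_le (le_of_eq hn2)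
  have hprod : (l1 ++ l2).prod = g⁻¹ * k := by
    rw [List.prod_append, hl12, hl22]; group
  have hmem : ∀ x ∈ l1 ++ l2, x ∈ S ∨ x⁻¹ ∈ S := by
    intro x hx
    rcases List.mem_append.mp hx with h | h
    · exact hl11 x h
    · exact hl21 x h
  calc wordDist S g k ≤ ((l1 ++ l2).length : ℕ∞) := wordDist_le_of_list hmem hprod
    _ = ((l1.length : ℕ) : ℕ∞) + ((l2.length : ℕ) : ℕ∞) := by
        rw [List.length_append]; push_cast; ring
    _ ≤ d1 + d2 := by
        rw [hn1, hn2]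
        exact add_le_add (by exact_mod_cast hl13) (by exact_mod_cast hl23)

/-! ### Finiteness of balls -/

lemma prodLists_finite (S : Set G) (hS : S.Finite) (n : ℕ) :
    {g : G | ∃ l : List G, (∀ x ∈ l, x ∈ S ∨ x⁻¹ ∈ S) ∧ l.prod = g ∧ l.length ≤ n}.Finite := by
  induction n with
  | zero =>
    refine Set.Finite.subset (Set.finite_singleton 1) ?_
    rintro g ⟨l, -, h2, h3⟩
    have : l = [] := List.length_eq_zero_iff.mp (Nat.le_zero.mp h3)
    simp [this] at h2
    simp [← h2]
  | succ n ih =>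
    refine Set.Finite.subset (ih.union (Set.Finite.biUnion (hS.union hS.inv)
      (fun a _ => ih.image (fun x => a * x)))) ?_
    rintro g ⟨l, h1, h2, h3⟩
    match l with
    | [] => exact Or.inl ⟨[], by simp, h2, by simp⟩
    | a :: l' =>
      right
      rw [Set.mem_iUnion₂]
      refine ⟨a, ?_, ⟨l'.prod, ⟨l', fun x hx => h1 x (List.mem_cons_of_mem a hx), rfl,
        by simpa using h3⟩, by rw [← h2, List.prod_cons]⟩⟩
      · rcases h1 a List.mem_cons_self with h | h
        · exact Set.mem_union_left _ h
        · exact Set.mem_union_right _ (Set.mem_inv.mpr (by simpa using h))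

lemma ball_finite (S : Set G) (hS : S.Finite) (n : ℕ) :
    {g : G | wordDist S 1 g ≤ (n : ℕ∞)}.Finite := by
  refine Set.Finite.subset (prodLists_finite S hS n) ?_
  intro g hg
  obtain ⟨l, h1, h2, h3⟩ := exists_list_of_wordDist_le hg
  exact ⟨l, h1, by rw [h2]; group, h3⟩

/-! ### Neighbourhood and Hausdorff-distance lemmas -/

lemma nbhd_mono {S : Set G} {r r' : ℕ∞} (h : r ≤ r') (A : Set G) :
    nbhd S r A ⊆ nbhd S r' A := by
  rintro x ⟨a, ha, hd⟩
  exact ⟨a, ha, le_trans hd h⟩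

lemma nbhd_comp {S : Set G} {r s : ℕ∞} {A B C : Set G}
    (h1 : A ⊆ nbhd S r B) (h2 : B ⊆ nbhd S s C) : A ⊆ nbhd S (r + s) C := by
  intro a ha
  obtain ⟨b, hb, hab⟩ := h1 ha
  obtain ⟨c, hc, hbc⟩ := h2 hb
  exact ⟨c, hc, le_trans (wordDist_triangle S a b c) (add_le_add hab hbc)⟩

/-- Two-sided inclusion bound. -/
def Bnd (S : Set G) (r : ℕ∞) (A B : Set G) : Prop :=
  A ⊆ nbhd S r B ∧ B ⊆ nbhd S r A

lemma Bnd.symm {S : Set G} {r : ℕ∞} {A B : Set G} (h : Bnd S r A B) : Bnd S r B A :=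
  ⟨h.2, h.1⟩

lemma Bnd.mono {S : Set G} {r r' : ℕ∞} {A B : Set G} (h : Bnd S r A B) (hr : r ≤ r') :
    Bnd S r' A B :=
  ⟨fun x hx => nbhd_mono hr _ (h.1 hx), fun x hx => nbhd_mono hr _ (h.2 hx)⟩

lemma Bnd.trans {S : Set G} {r s : ℕ∞} {A B C : Set G}
    (h1 : Bnd S r A B) (h2 : Bnd S s B C) : Bnd S (r + s) A C :=
  ⟨nbhd_comp h1.1 h2.1, by rw [add_comm]; exact nbhd_comp h2.2 h1.2⟩

lemma hdist_le_of_bnd {S : Set G} {r : ℕ∞} {A B : Set G} (h : Bnd S r A B) :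
    hdist S A B ≤ r :=
  sInf_le h

lemma exists_bnd_of_hdist_lt {S : Set G} {c : ℕ∞} {A B : Set G} (h : hdist S A B < c) :
    ∃ r, r < c ∧ Bnd S r A B := by
  obtain ⟨r, hr, hlt⟩ := sInf_lt_iff.mp h
  exact ⟨r, hlt, hr⟩

lemma mem_smul_nbhd_iff {S : Set G} {r : ℕ∞} {B : Set G} (a x : G) :
    a * x ∈ nbhd S r (a • B) ↔ x ∈ nbhd S r B := by
  constructor
  · rintro ⟨b, ⟨b0, hb0, rfl⟩, hd⟩
    refine ⟨b0, hb0, ?_⟩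
    have hd' : wordDist S (a * x) (a * b0) ≤ r := by simpa [smul_eq_mul] using hd
    rwa [wordDist_mul_left] at hd'
  · rintro ⟨b, hb, hd⟩
    refine ⟨a * b, ⟨b, hb, rfl⟩, ?_⟩
    rw [wordDist_mul_left]
    exact hd

lemma smul_subset_nbhd_iff {S : Set G} {r : ℕ∞} {A B : Set G} (a : G) :
    a • A ⊆ nbhd S r (a • B) ↔ A ⊆ nbhd S r B := by
  constructor
  · intro h x hx
    have h2 := h (Set.smul_mem_smul_set hx)
    rw [smul_eq_mul] at h2
    exact (mem_smul_nbhd_iff a x).mp h2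
  · rintro h x ⟨x0, hx0, rfl⟩
    have h2 := (mem_smul_nbhd_iff a x0).mpr (h hx0)
    simpa [smul_eq_mul] using h2

lemma hdist_smul (S : Set G) (a : G) (A B : Set G) :
    hdist S (a • A) (a • B) = hdist S A B := by
  unfold hdist
  congr 1
  ext r
  rw [Set.mem_setOf_eq, Set.mem_setOf_eq, smul_subset_nbhd_iff, smul_subset_nbhd_iff]

/-! ### Finite index from coverings -/

lemma relindex_ne_zero_of_cover {K D : Subgroup G} {ι : Type*} (V : Finset ι) (E : ι → Set G)
    (hcov : (K : Set G) ⊆ ⋃ v ∈ V, E v)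
    (hsame : ∀ v ∈ V, ∀ y ∈ E v, ∀ y' ∈ E v, y⁻¹ * y' ∈ D) :
    D.relIndex K ≠ 0 := by
  have hfin : Finite (K ⧸ D.subgroupOf K) := by
    rw [← Set.finite_univ_iff]
    have hsub : (Set.univ : Set (K ⧸ D.subgroupOf K)) ⊆
        ⋃ v ∈ V, {z : K ⧸ D.subgroupOf K | ∃ k : K, (k : G) ∈ E v ∧ z = QuotientGroup.mk k} := by
      rintro z -
      induction z using QuotientGroup.induction_on with
      | H k =>
        obtain ⟨v, hv, h3⟩ := Set.mem_iUnion₂.mp (hcov k.2)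
        exact Set.mem_iUnion₂.mpr ⟨v, hv, k, h3, rfl⟩
    refine Set.Finite.subset (Set.Finite.biUnion V.finite_toSet (fun v hv => ?_)) hsub
    refine Set.Subsingleton.finite ?_
    rintro z1 ⟨k1, hk1, rfl⟩ z2 ⟨k2, hk2, rfl⟩
    rw [QuotientGroup.eq]
    rw [Subgroup.mem_subgroupOf]
    exact hsame v hv _ hk1 _ hk2
  exact Subgroup.index_ne_zero_of_finite

lemma relindex_ne_zero_of_cover' {K D : Subgroup G} {ι : Type*} (V : Finset ι) (E : ι → Set G)
    (hcov : (K : Set G) ⊆ ⋃ v ∈ V, E v)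
    (hsame : ∀ v ∈ V, ∀ y ∈ E v, ∀ y' ∈ E v, y * y'⁻¹ ∈ D) :
    D.relIndex K ≠ 0 := by
  refine relindex_ne_zero_of_cover V (fun v => (E v)⁻¹) ?_ ?_
  · intro k hk
    have hkinv : k⁻¹ ∈ (K : Set G) := K.inv_mem hk
    obtain ⟨v, hv, h3⟩ := Set.mem_iUnion₂.mp (hcov hkinv)
    exact Set.mem_iUnion₂.mpr ⟨v, hv, Set.mem_inv.mpr (by simpa using h3)⟩
  · intro v hv y hy y' hy'
    have := hsame v hv _ (Set.mem_inv.mp hy) _ (Set.mem_inv.mp hy')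
    simpa using this

/-! ### Conjugate subgroups -/

lemma mem_conjSub {g x : G} {P : Subgroup G} : x ∈ conjSub g P ↔ g⁻¹ * x * g ∈ P := by
  unfold conjSub
  rw [Subgroup.mem_pointwise_smul_iff_inv_smul_mem, ← ConjAct.toConjAct_inv,
    ConjAct.toConjAct_smul]
  simp [mul_assoc]

lemma commensurable_conjSub_iff {g : G} {P : Subgroup G} :
    g ∈ Subgroup.Commensurable.commensurator P ↔ Subgroup.Commensurable (conjSub g P) P :=
  Subgroup.Commensurable.commensurator_mem_iff P g

/-! ### Cosets of commensurating elements are at finite Hausdorff distance -/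

lemma exists_bound_of_relindex_ne_zero {S : Set G} (hgenS : Subgroup.closure S = ⊤)
    {g : G} {P : Subgroup G} (hidx : (conjSub g P).relIndex P ≠ 0) :
    ∃ r : ℕ∞, r < ⊤ ∧ ∀ p ∈ P, ∃ p' ∈ P, wordDist S p (g * p') ≤ r := by
  have hfin : Finite (P ⧸ (conjSub g P).subgroupOf P) := by
    rw [Subgroup.relIndex] at hidx
    rcases Classical.em (Infinite (P ⧸ (conjSub g P).subgroupOf P)) with h | h
    · exact absurd (Subgroup.index_eq_zero_iff_infinite.mpr h) hidx
    · exact not_infinite_iff_finite.mp h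
  letI : Fintype (P ⧸ (conjSub g P).subgroupOf P) := Fintype.ofFinite _
  refine ⟨Finset.univ.sup (fun z : P ⧸ (conjSub g P).subgroupOf P =>
      wordDist S 1 ((Quotient.out z : P) * g)), ?_, ?_⟩
  · rw [Finset.sup_lt_iff (by simp : (⊥ : ℕ∞) < ⊤)]
    intro z _
    exact wordDist_lt_top hgenS _ _
  · intro p hp
    set z : P ⧸ (conjSub g P).subgroupOf P := QuotientGroup.mk ⟨p⁻¹, P.inv_mem hp⟩ with hz
    set c : P := Quotient.out z with hc
    have hmk : QuotientGroup.mk c = z := QuotientGroup.out_eq' z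
    have hd : (c : G)⁻¹ * p⁻¹ ∈ conjSub g P := by
      have := (QuotientGroup.eq (s := (conjSub g P).subgroupOf P)).mp (hmk.trans hz)
      rw [Subgroup.mem_subgroupOf] at this
      simpa using this
    have hpc : p * (c : G) ∈ conjSub g P := by
      have := (conjSub g P).inv_mem hd
      simpa [mul_inv_rev] using this
    have hp' : g⁻¹ * (p * (c : G)) * g ∈ P := mem_conjSub.mp hpc
    refine ⟨g⁻¹ * (p * (c : G)) * g, hp', ?_⟩
    have h2 := wordDist_mul_left S p 1 (p⁻¹ * (g * (g⁻¹ * (p * (c : G)) * g)))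
    rw [mul_one, mul_inv_cancel_left] at h2
    have hcalc : p⁻¹ * (g * (g⁻¹ * (p * (c : G)) * g)) = (c : G) * g := by group
    rw [hcalc] at h2
    rw [h2, hc]
    exact Finset.le_sup (f := fun z : P ⧸ (conjSub g P).subgroupOf P =>
      wordDist S 1 ((Quotient.out z : P) * g)) (Finset.mem_univ z)

lemma hdist_coset_lt_top {S : Set G} (hgenS : Subgroup.closure S = ⊤)
    {P : Subgroup G} {g : G} (hg : g ∈ Subgroup.Commensurable.commensurator P) :
    hdist S (g • (P : Set G)) (P : Set G) < ⊤ := by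
  have h1 : (conjSub g P).relIndex P ≠ 0 := (commensurable_conjSub_iff.mp hg).1
  have hginv : g⁻¹ ∈ Subgroup.Commensurable.commensurator P := Subgroup.inv_mem _ hg
  have h2 : (conjSub g⁻¹ P).relIndex P ≠ 0 := (commensurable_conjSub_iff.mp hginv).1
  obtain ⟨r1, hr1, hb1⟩ := exists_bound_of_relindex_ne_zero hgenS h1
  obtain ⟨r2, hr2, hb2⟩ := exists_bound_of_relindex_ne_zero hgenS h2
  have hbnd : Bnd S (r1 ⊔ r2) (g • (P : Set G)) (P : Set G) := by
    constructor
    · rintro x ⟨p, hp, rfl⟩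
      obtain ⟨p', hp', hd⟩ := hb2 p hp
      refine ⟨p', hp', ?_⟩
      have h2 := wordDist_mul_left S g p (g⁻¹ * p')
      rw [mul_inv_cancel_left] at h2
      have h3 : wordDist S (g * p) p' ≤ r2 := by rw [h2]; exact hd
      simpa [smul_eq_mul] using le_trans h3 (le_sup_right (a := r1))
    · intro p hp
      obtain ⟨p', hp', hd⟩ := hb1 p hp
      exact ⟨g * p', ⟨p', hp', rfl⟩, le_trans hd le_sup_left⟩
  exact lt_of_le_of_lt (hdist_le_of_bnd hbnd) (max_lt hr1 hr2)

/-! ### Finite Hausdorff distance implies commensurability -/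

lemma commensurable_of_hdist_lt_top {S : Set G} (hS : S.Finite)
    {P Q : Subgroup G} {x : G}
    (h : hdist S (P : Set G) (x • (Q : Set G)) < ⊤) :
    Subgroup.Commensurable P (conjSub x Q) := by
  obtain ⟨r, hrt, hb⟩ := exists_bnd_of_hdist_lt h
  set n : ℕ := r.toNat with hn
  have hrn : r ≤ (n : ℕ∞) := le_of_eq (ENat.coe_toNat hrt.ne).symm
  set W : Finset G := (ball_finite S hS n).toFinset with hW
  constructor
  · -- P.relIndex (conjSub x Q) ≠ 0
    refine relindex_ne_zero_of_cover' (D := P) W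
      (fun w => {y | ∃ p ∈ P, y = p * w⁻¹ * x⁻¹}) ?_ ?_
    · intro y hy
      obtain ⟨qel, hq, hyq⟩ : ∃ qel ∈ Q, y = x * qel * x⁻¹ := by
        have := mem_conjSub.mp hy
        exact ⟨x⁻¹ * y * x, this, by group⟩
      have hxq : x * qel ∈ x • (Q : Set G) := ⟨qel, hq, rfl⟩
      obtain ⟨p, hp, hd⟩ := hb.2 hxq
      set w : G := (x * qel)⁻¹ * p with hw
      have hwW : w ∈ W := by
        rw [hW, Set.Finite.mem_toFinset]
        have h2 := wordDist_mul_left S (x * qel) 1 w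
        rw [mul_one, hw, mul_inv_cancel_left] at h2
        rw [Set.mem_setOf_eq, ← h2]
        exact le_trans hd hrn
      simp only [Set.mem_iUnion]
      refine ⟨w, hwW, p, hp, ?_⟩
      rw [hyq, hw]
      group
    · rintro w hw y ⟨p, hp, rfl⟩ y' ⟨p', hp', rfl⟩
      have : p * w⁻¹ * x⁻¹ * (p' * w⁻¹ * x⁻¹)⁻¹ = p * p'⁻¹ := by group
      rw [this]
      exact P.mul_mem hp (P.inv_mem hp')
  · -- (conjSub x Q).relIndex P ≠ 0
    refine relindex_ne_zero_of_cover' (D := conjSub x Q) W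
      (fun w => {y | ∃ qel ∈ Q, y = x * qel * w⁻¹}) ?_ ?_
    · intro p hp
      obtain ⟨b, ⟨qel, hq, rfl⟩, hd⟩ := hb.1 hp
      have hd' : wordDist S p (x * qel) ≤ r := by simpa [smul_eq_mul] using hd
      set w : G := p⁻¹ * (x * qel) with hw
      have hwW : w ∈ W := by
        rw [hW, Set.Finite.mem_toFinset]
        have h2 := wordDist_mul_left S p 1 w
        rw [mul_one, hw, mul_inv_cancel_left] at h2
        rw [Set.mem_setOf_eq, ← h2]
        exact le_trans hd' hrn
      simp only [Set.mem_iUnion]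
      refine ⟨w, hwW, qel, hq, ?_⟩
      rw [hw]
      group
    · rintro w hw y ⟨qel, hq, rfl⟩ y' ⟨qel', hq', rfl⟩
      have : x * qel * w⁻¹ * (x * qel' * w⁻¹)⁻¹ = x * (qel * qel'⁻¹) * x⁻¹ := by group
      rw [this, mem_conjSub]
      have : x⁻¹ * (x * (qel * qel'⁻¹) * x⁻¹) * x = qel * qel'⁻¹ := by group
      rw [this]
      exact Q.mul_mem hq (Q.inv_mem hq')

end QIPairAux

open QIPairAux

/-- If `q : (G, Ps) → (H, Qs)` is a quasi-isometry of pairs of finite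
collections, `Qs` is reduced, and every member of `Qs` has finite index in its commensurator,
then every member of `Ps` has finite index in its commensurator. -/
theorem finite_index_in_commensurator_of_qiPair {H : Type*} [Group H]
    (S : Set G) (hS : S.Finite) (hgenS : Subgroup.closure S = ⊤)
    (T : Set H) (hT : T.Finite) (hgenT : Subgroup.closure T = ⊤)
    (q : G → H) (Ps : Set (Subgroup G)) (Qs : Set (Subgroup H)) (L C M : ℕ)
    (hPs : Ps.Finite) (hQs : Qs.Finite)
    (hq : IsQIPair S T q Ps Qs L C M) (hred : Reduced Qs)
    (hQfi : ∀ Q ∈ Qs, Q.relIndex (Subgroup.Commensurable.commensurator Q) ≠ 0) :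
    ∀ P ∈ Ps, P.relIndex (Subgroup.Commensurable.commensurator P) ≠ 0 := by
  intro P hP hzero
  set K : Subgroup G := Subgroup.Commensurable.commensurator P with hK
  -- the quotient K ⧸ P is infinite
  have hinf : Infinite (K ⧸ P.subgroupOf K) := by
    rw [← Subgroup.index_eq_zero_iff_infinite]
    exact hzero
  -- QI transfer lemmas
  have qi_forward : ∀ (A B : Set G) (r : ℕ∞), A ⊆ nbhd S r B →
      q '' A ⊆ nbhd T ((L : ℕ∞) * r + (C : ℕ∞)) (q '' B) := by
    rintro A B r hAB y ⟨a, ha, rfl⟩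
    obtain ⟨b, hb, hd⟩ := hAB ha
    refine ⟨q b, ⟨b, hb, rfl⟩, ?_⟩
    refine le_trans (hq.1 a b).1 ?_
    exact add_le_add_left (mul_le_mul_right hd _) _
  have qi_backward : ∀ (A B : Set G) (r : ℕ∞), q '' A ⊆ nbhd T r (q '' B) →
      A ⊆ nbhd S ((L : ℕ∞) * r + (C : ℕ∞)) B := by
    intro A B r hAB a ha
    obtain ⟨y, ⟨b, hb, rfl⟩, hd⟩ := hAB ⟨a, ha, rfl⟩
    refine ⟨b, hb, ?_⟩
    refine le_trans (hq.1 a b).2 ?_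
    exact add_le_add_left (mul_le_mul_right hd _) _
  -- the base coset and its image coset
  have hPin : (P : Set G) ∈ cosetsOf Ps := ⟨1, P, hP, (one_smul _ _).symm⟩
  obtain ⟨B0, hB0Q, hB0d⟩ := hq.2.2.1 _ hPin
  obtain ⟨h0, Q0, hQ0, rfl⟩ := hB0Q
  -- key step: every commensurating coset is a coset of a bounded element
  set Rn : ℕ := L * (M + M) + C with hRn
  have key : ∀ g : K, ∃ a : G, wordDist S 1 a ≤ (Rn : ℕ∞) ∧
      (g : G) • (P : Set G) = a • (P : Set G) := by
    intro g
    have hAin : (g : G) • (P : Set G) ∈ cosetsOf Ps := ⟨g, P, hP, rfl⟩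
    obtain ⟨B1, hB1Q, hB1d⟩ := hq.2.2.1 _ hAin
    obtain ⟨h1, Q1, hQ1, rfl⟩ := hB1Q
    -- hdist of the two cosets in G is finite
    have hAg : hdist S ((g : G) • (P : Set G)) (P : Set G) < ⊤ :=
      hdist_coset_lt_top hgenS g.2
    obtain ⟨rG, hrGt, hbG⟩ := exists_bnd_of_hdist_lt hAg
    -- transfer to H
    have hbH : Bnd T ((L : ℕ∞) * rG + (C : ℕ∞)) (q '' ((g : G) • (P : Set G)))
        (q '' (P : Set G)) :=
      ⟨qi_forward _ _ _ hbG.1, qi_forward _ _ _ hbG.2⟩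
    have hbHt : (L : ℕ∞) * rG + (C : ℕ∞) ≠ ⊤ :=
      WithTop.add_ne_top.mpr ⟨WithTop.mul_ne_top (WithTop.natCast_ne_top L) hrGt.ne,
        WithTop.natCast_ne_top C⟩
    obtain ⟨rB1, hrB1, hbB1⟩ := exists_bnd_of_hdist_lt hB1d
    obtain ⟨rB0, hrB0, hbB0⟩ := exists_bnd_of_hdist_lt hB0d
    have hrB1t : rB1 ≠ ⊤ := (hrB1.trans (WithTop.coe_lt_top M)).ne
    have hrB0t : rB0 ≠ ⊤ := (hrB0.trans (WithTop.coe_lt_top M)).ne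
    -- chain of bounds gives finite Hausdorff distance between the two image cosets
    have hchain : Bnd T (rB1 + ((L : ℕ∞) * rG + (C : ℕ∞)) + rB0)
        (h1 • (Q1 : Set H)) (h0 • (Q0 : Set H)) :=
      (hbB1.symm.trans hbH).trans hbB0
    have hQQ : hdist T (h1 • (Q1 : Set H)) (h0 • (Q0 : Set H)) < ⊤ :=
      lt_of_le_of_lt (hdist_le_of_bnd hchain)
        (WithTop.lt_top_iff_ne_top.mpr
          (WithTop.add_ne_top.mpr ⟨WithTop.add_ne_top.mpr ⟨hrB1t, hbHt⟩, hrB0t⟩))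
    -- reducedness forces the two image cosets to coincide
    have hcomm : Subgroup.Commensurable Q1 (conjSub (h1⁻¹ * h0) Q0) := by
      apply commensurable_of_hdist_lt_top hT
      have heq : hdist T (Q1 : Set H) ((h1⁻¹ * h0) • (Q0 : Set H)) =
          hdist T (h1 • (Q1 : Set H)) (h0 • (Q0 : Set H)) := by
        rw [← hdist_smul T h1 (Q1 : Set H) ((h1⁻¹ * h0) • (Q0 : Set H)), smul_smul,
          show h1 * (h1⁻¹ * h0) = h0 by group]
      rw [heq]
      exact hQQ
    obtain ⟨hQeq, hmem⟩ := hred Q1 hQ1 Q0 hQ0 _ hcomm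
    subst hQeq
    have hcoset : h1 • (Q1 : Set H) = h0 • (Q1 : Set H) := (leftCoset_eq_iff _).mpr hmem
    -- both image cosets are within M of the same coset
    have hb1' : Bnd T rB1 (q '' ((g : G) • (P : Set G))) (h0 • (Q1 : Set H)) :=
      hcoset ▸ hbB1
    have htot : Bnd T (rB1 + rB0) (q '' ((g : G) • (P : Set G))) (q '' (P : Set G)) :=
      hb1'.trans hbB0.symm
    have htot' : Bnd T ((M : ℕ∞) + (M : ℕ∞)) (q '' ((g : G) • (P : Set G)))
        (q '' (P : Set G)) :=
      htot.mono (add_le_add hrB1.le hrB0.le)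
    have hback : Bnd S ((L : ℕ∞) * ((M : ℕ∞) + (M : ℕ∞)) + (C : ℕ∞))
        ((g : G) • (P : Set G)) (P : Set G) :=
      ⟨qi_backward _ _ _ htot'.1, qi_backward _ _ _ htot'.2⟩
    have hcast : (L : ℕ∞) * ((M : ℕ∞) + (M : ℕ∞)) + (C : ℕ∞) = (Rn : ℕ∞) := by
      rw [hRn]; push_cast; ring
    obtain ⟨a, haA, had⟩ := hback.2 (show (1 : G) ∈ (P : Set G) from P.one_mem)
    refine ⟨a, ?_, ?_⟩
    · rw [← hcast]
      exact had
    · obtain ⟨p, hp, rfl⟩ := haA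
      simp only [smul_eq_mul]
      symm
      rw [leftCoset_eq_iff]
      have : ((g : G) * p)⁻¹ * (g : G) = p⁻¹ := by group
      rw [this]
      exact P.inv_mem hp
  -- an injective map from the infinite quotient into a finite set of cosets
  let f : K ⧸ P.subgroupOf K → Set G := fun z => ((Quotient.out z : K) : G) • (P : Set G)
  have hfinj : Function.Injective f := by
    intro z1 z2 hf
    have hmem : ((Quotient.out z1 : K) : G)⁻¹ * ((Quotient.out z2 : K) : G) ∈ P :=
      (leftCoset_eq_iff _).mp hf
    have hmem' : (Quotient.out z1)⁻¹ * (Quotient.out z2) ∈ P.subgroupOf K := by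
      rw [Subgroup.mem_subgroupOf]; simpa using hmem
    calc z1 = QuotientGroup.mk (Quotient.out z1) := (QuotientGroup.out_eq' z1).symm
      _ = QuotientGroup.mk (Quotient.out z2) := (QuotientGroup.eq).mpr hmem'
      _ = z2 := QuotientGroup.out_eq' z2
  have hrange : Set.range f ⊆
      (fun a : G => a • (P : Set G)) '' {a : G | wordDist S 1 a ≤ (Rn : ℕ∞)} := by
    rintro A ⟨z, rfl⟩
    obtain ⟨a, ha, heq⟩ := key (Quotient.out z)
    exact ⟨a, ha, heq.symm⟩
  have hfin : (Set.range f).Finite := ((ball_finite S hS Rn).image _).subset hrange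
  exact (Set.infinite_range_of_injective hfinj) hfin
end
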